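/- Let n ≥ 2, Ω ⊆ ℝⁿ open, p ∈ Ω, and f ∈ C²(Ω) with Df(p) ≠ 0, f(p) = 0. Suppose the scalar curvature of the graph of f is nonnegative at p, i.e. 2σ₂(A)(p) ≥ 0 where A is the shape operator of the graph. Then at p: ⟨ν,η⟩·H·H_Σ ≥ (n/(2(n−1)))·⟨ν,η⟩²·H_Σ², where H is the mean curvature of the graph with respect to the upward normal ν = (−Df,1)/√(1+|Df|²), η = −Df/|Df|, and H_Σ is the mean curvature of the level set {f = 0} ⊂ ℝⁿ with respect to η. In particular if H(p) = 0 then H_Σ(p) = 0. -/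

import Mathlib

open scoped BigOperators

-- atomic sum identities
section Sums
variable {n : ℕ} (G : Fin n → ℝ) (b : Fin n → Fin n → ℝ) (c : Fin n → ℝ)
variable (hsym : ∀ i j, b i j = b j i) (hc : ∀ j, c j = ∑ l, G l * b l j)

include hc in
lemma Icol : ∀ j, ∑ i, G i * b i j = c j := fun j => (hc j).symm

include hsym hc in
lemma Irow : ∀ i, ∑ j, b i j * G j = c i := by
  intro i
  rw [hc i]
  exact Finset.sum_congr rfl fun j _ => by rw [hsym i j]; ring

include hsym in
lemma I2 : ∑ i, ∑ j, b i j * b j i = ∑ i, ∑ j, (b i j)^2 :=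
  Finset.sum_congr rfl fun i _ => Finset.sum_congr rfl fun j _ => by
    rw [hsym j i]; ring

include hsym hc in
lemma I3 : ∑ i, ∑ j, b i j * (G i * c j) = ∑ j, (c j)^2 := by
  rw [Finset.sum_comm]
  calc ∑ j, ∑ i, b i j * (G i * c j) = ∑ j, c j * ∑ i, G i * b i j := by
        refine Finset.sum_congr rfl fun j _ => ?_
        rw [Finset.mul_sum]
        exact Finset.sum_congr rfl fun i _ => by ring
    _ = ∑ j, (c j)^2 := by
        refine Finset.sum_congr rfl fun j _ => ?_
        rw [Icol G b c hc j]; ring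

include hsym hc in
lemma I4 : ∑ i, ∑ j, b i j * (c i * G j) = ∑ j, (c j)^2 := by
  calc ∑ i, ∑ j, b i j * (c i * G j) = ∑ i, c i * ∑ j, b i j * G j := by
        refine Finset.sum_congr rfl fun i _ => ?_
        rw [Finset.mul_sum]
        exact Finset.sum_congr rfl fun j _ => by ring
    _ = ∑ j, (c j)^2 := by
        refine Finset.sum_congr rfl fun i _ => ?_
        rw [Irow G b c hsym hc i]; ring

include hsym hc in
lemma I5 : ∑ i, ∑ j, b i j * (G i * G j) = ∑ i, G i * c i := by
  calc ∑ i, ∑ j, b i j * (G i * G j) = ∑ i, G i * ∑ j, b i j * G j := by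
        refine Finset.sum_congr rfl fun i _ => ?_
        rw [Finset.mul_sum]
        exact Finset.sum_congr rfl fun j _ => by ring
    _ = ∑ i, G i * c i := by
        refine Finset.sum_congr rfl fun i _ => ?_
        rw [Irow G b c hsym hc i]

lemma Isep (u v : Fin n → ℝ) : ∑ i, ∑ j, u i * v j = (∑ i, u i) * (∑ j, v j) := by
  rw [Finset.sum_mul_sum]

end Sums

section TraceCS
variable {n : ℕ} (G : Fin n → ℝ) (b : Fin n → Fin n → ℝ) (c : Fin n → ℝ)

lemma traceCS (hsym : ∀ i j, b i j = b j i) (hc : ∀ j, c j = ∑ l, G l * b l j)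
    (go : ℝ) (hgo : 0 < go) (hg2 : go ^ 2 = ∑ l, (G l) ^ 2) :
    (go^2 * (∑ i, b i i) - ∑ i, G i * c i)^2 * go^4
      ≤ ((n:ℝ) - 1) * (go^4 * (∑ i, ∑ j, (b i j)^2) - 2*go^2*(∑ j, (c j)^2)
          + (∑ i, G i * c i)^2) * go^4 := by
  set T := ∑ i, b i i with hT
  set Q := ∑ i, G i * c i with hQ
  set B2 := ∑ i, ∑ j, (b i j)^2 with hB2
  set C2 := ∑ j, (c j)^2 with hC2
  set Cm : Fin n → Fin n → ℝ :=
    fun i j => go^2*(go^2 * b i j) - go^2*(G i * c j + c i * G j) + Q*(G i * G j) with hCm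
  set P : Fin n → Fin n → ℝ := fun i j => (if i = j then go^2 else 0) - G i * G j with hP
  have cs := Finset.sum_mul_sq_le_sq_mul_sq Finset.univ
      (fun q : Fin n × Fin n => Cm q.1 q.2) (fun q : Fin n × Fin n => P q.1 q.2)
  rw [Fintype.sum_prod_type, Fintype.sum_prod_type, Fintype.sum_prod_type] at cs
  -- helper sums
  have hGG : ∑ l, G l * G l = go^2 := by
    rw [hg2]; exact Finset.sum_congr rfl fun l _ => (sq (G l)).symm ▸ (by ring)
  have hcg : ∑ j, c j * G j = Q := by
    rw [hQ]; exact Finset.sum_congr rfl fun j _ => by ring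
  have hGsq : ∑ l, (G l)^2 = go^2 := hg2.symm
  -- ∑ P²
  have hgg : ∑ i, ∑ j, (P i j)^2 = ((n:ℝ) - 1) * go^4 := by
    have hpt : ∀ i j, (P i j)^2 =
        (if i = j then go^4 - 2*go^2*(G i * G j) else 0) + (G i)^2 * (G j)^2 := by
      intro i j
      by_cases h : i = j
      · subst h; simp only [hP, eq_self_iff_true, if_true]; ring
      · simp only [hP, if_neg h]; ring
    simp only [hpt, Finset.sum_add_distrib, Finset.sum_ite_eq, Finset.mem_univ, if_pos]
    rw [Finset.sum_sub_distrib]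
    have h1 : ∑ i, ∑ j, (G i)^2 * (G j)^2 = go^2 * go^2 := by
      rw [Isep]; rw [hGsq]
    have h2 : ∑ i, 2*go^2*(G i * G i) = 2*go^2*go^2 := by
      rw [← Finset.mul_sum, hGG]
    rw [h1, h2, Finset.sum_const, Finset.card_univ, Fintype.card_fin]
    push_cast; ring
  -- trace of Cm
  have htr : ∑ i, Cm i i = go^4 * T - go^2 * Q := by
    have hpt : ∀ i, Cm i i = (b i i) * go^4 - (G i * c i) * go^2 - (c i * G i) * go^2
        + (G i * G i) * Q := fun i => by simp only [hCm]; ring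
    simp only [hpt, Finset.sum_add_distrib, Finset.sum_sub_distrib, ← Finset.sum_mul]
    rw [← hT, ← hQ, hcg, hGG]; ring
  -- ∑ Cm ∘ GG
  have hCmGG : ∑ i, ∑ j, Cm i j * (G i * G j) = 0 := by
    have hpt : ∀ i j, Cm i j * (G i * G j) =
        (b i j * (G i * G j)) * go^4
        - ((G i)^2 * (c j * G j)) * go^2
        - ((G i * c i) * (G j)^2) * go^2
        + ((G i)^2 * (G j)^2) * Q := fun i j => by simp only [hCm]; ring
    simp only [hpt, Finset.sum_add_distrib, Finset.sum_sub_distrib, ← Finset.sum_mul]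
    rw [I5 G b c hsym hc, Isep, Isep, Isep, hGsq, hcg, ← hQ]
    ring
  -- ∑ Cm * P
  have hfg : ∑ i, ∑ j, Cm i j * P i j = go^4 * (go^2*T - Q) := by
    have hpt : ∀ i j, Cm i j * P i j =
        (if i = j then go^2 * Cm i j else 0) - Cm i j * (G i * G j) := by
      intro i j
      by_cases h : i = j
      · subst h; simp only [hP, eq_self_iff_true, if_true]; ring
      · simp only [hP, if_neg h]; ring
    simp only [hpt, Finset.sum_sub_distrib, Finset.sum_ite_eq, Finset.mem_univ, if_pos]
    rw [hCmGG, ← Finset.mul_sum, htr]; ring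
  -- ∑ Cm²
  have hff : ∑ i, ∑ j, (Cm i j)^2 = go^8*B2 - 2*go^6*C2 + go^4*Q^2 := by
    have hpt : ∀ i j, (Cm i j)^2 =
        ((b i j)^2) * go^8
        - (b i j * (G i * c j)) * (2*go^6)
        - (b i j * (c i * G j)) * (2*go^6)
        + (b i j * (G i * G j)) * (2*go^4*Q)
        + ((G i)^2 * (c j)^2) * go^4
        + ((c i)^2 * (G j)^2) * go^4
        + ((G i * c i) * (G j * c j)) * (2*go^4)
        - ((G i)^2 * (c j * G j)) * (2*go^2*Q)
        - ((G i * c i) * (G j)^2) * (2*go^2*Q)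
        + ((G i)^2 * (G j)^2) * Q^2 := fun i j => by simp only [hCm]; ring
    simp only [hpt, Finset.sum_add_distrib, Finset.sum_sub_distrib, ← Finset.sum_mul]
    rw [I3 G b c hsym hc, I4 G b c hsym hc, I5 G b c hsym hc,
      Isep, Isep, Isep, Isep, Isep, Isep]
    rw [hGsq, hcg]
    have hQ' : ∑ i, G i * c i = Q := hQ.symm
    have hC2' : ∑ j, (c j)^2 = C2 := hC2.symm
    rw [hQ', hC2', ← hB2]
    ring
  rw [hfg, hff, hgg] at cs
  have h4 : (0:ℝ) < go^4 := by positivity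
  have key : (go^2*T - Q)^2 * go^4 * go^4
      ≤ ((n:ℝ)-1) * (go^4*B2 - 2*go^2*C2 + Q^2) * go^4 * go^4 := by
    linear_combination cs
  exact le_of_mul_le_mul_right key h4
end TraceCS

lemma core_ineq (n : ℕ) (hn : 2 ≤ n) (G : Fin n → ℝ) (b : Fin n → Fin n → ℝ)
    (c : Fin n → ℝ) (hsym : ∀ i j, b i j = b j i) (hc : ∀ j, c j = ∑ l, G l * b l j)
    (go wo : ℝ) (hgo : 0 < go) (hwo : 0 < wo)
    (hg2 : go ^ 2 = ∑ l, (G l) ^ 2) (hw2 : wo ^ 2 = 1 + go ^ 2)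
    (hσ : 0 ≤ (∑ i, (b i i / wo - G i * c i / wo ^ 3)) ^ 2
        - ∑ i, ∑ j, ((b i j / wo - G i * c j / wo ^ 3) * (b j i / wo - G j * c i / wo ^ 3))) :
    (go / wo) * (∑ i, (b i i / wo - G i * c i / wo ^ 3)) *
        (∑ i, (b i i / go - G i * c i / go ^ 3))
      ≥ (n : ℝ) / (2 * ((n:ℝ) - 1)) * (go / wo) ^ 2 *
        (∑ i, (b i i / go - G i * c i / go ^ 3)) ^ 2 := by
  set T := ∑ i, b i i with hT
  set Q := ∑ i, G i * c i with hQ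
  set B2 := ∑ i, ∑ j, (b i j)^2 with hB2
  set C2 := ∑ j, (c j)^2 with hC2
  have hwo3 : wo^3 ≠ 0 := by positivity
  have hgo3 : go^3 ≠ 0 := by positivity
  -- H and HSig identities
  have hH : (∑ i, (b i i / wo - G i * c i / wo ^ 3)) = (wo^2 * T - Q) / wo^3 := by
    rw [Finset.sum_sub_distrib, ← Finset.sum_div, ← Finset.sum_div, ← hT, ← hQ]
    field_simp
  have hS : (∑ i, (b i i / go - G i * c i / go ^ 3)) = (go^2 * T - Q) / go^3 := by
    rw [Finset.sum_sub_distrib, ← Finset.sum_div, ← Finset.sum_div, ← hT, ← hQ]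
    field_simp
  -- expansion of the double sum
  have hAA : ∑ i, ∑ j, ((b i j / wo - G i * c j / wo ^ 3) * (b j i / wo - G j * c i / wo ^ 3))
      = B2/wo^2 - 2*C2/wo^4 + Q^2/wo^6 := by
    have hpt : ∀ i j, (b i j / wo - G i * c j / wo ^ 3) * (b j i / wo - G j * c i / wo ^ 3)
        = ((b i j)^2) * (1/wo^2) - (b i j * (c i * G j)) * (1/wo^4)
          - (b i j * (G i * c j)) * (1/wo^4) + ((G i * c i) * (G j * c j)) * (1/wo^6) := by
      intro i j
      rw [hsym j i]
      field_simp
      ring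
    simp only [hpt, Finset.sum_add_distrib, Finset.sum_sub_distrib, ← Finset.sum_mul]
    rw [I3 G b c hsym hc, I4 G b c hsym hc, Isep, ← hQ, ← hB2, ← hC2]
    field_simp
    ring
  -- σ₂ in polynomial form
  have hσp : wo^4 * B2 - 2*wo^2*C2 + Q^2 ≤ (wo^2*T - Q)^2 := by
    rw [hH, hAA] at hσ
    have h6 : (0:ℝ) < wo^6 := by positivity
    have e : ((wo^2*T - Q)/wo^3)^2 - (B2/wo^2 - 2*C2/wo^4 + Q^2/wo^6)
        = ((wo^2*T - Q)^2 - (wo^4*B2 - 2*wo^2*C2 + Q^2))/wo^6 := by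
      field_simp
    rw [e] at hσ
    have := mul_nonneg hσ h6.le
    rw [div_mul_cancel₀ _ (ne_of_gt h6)] at this
    linarith
  -- Cauchy–Schwarz: Q² ≤ go² C2
  have hQC : Q^2 ≤ go^2 * C2 := by
    have := Finset.sum_mul_sq_le_sq_mul_sq Finset.univ G c
    rw [← hg2, ← hC2, ← hQ] at this
    exact this
  -- trace Cauchy–Schwarz
  have htc := traceCS G b c hsym hc go hgo hg2
  rw [← hT, ← hQ, ← hB2, ← hC2] at htc
  have h4 : (0:ℝ) < go^4 := by positivity
  have hX2 : (go^2*T - Q)^2 ≤ ((n:ℝ)-1) * (go^4*B2 - 2*go^2*C2 + Q^2) :=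
    le_of_mul_le_mul_right htc h4
  -- combine
  have hn1 : (1:ℝ) ≤ (n:ℝ) - 1 := by
    have : (2:ℝ) ≤ (n:ℝ) := by exact_mod_cast hn
    linarith
  have hn2 : ((n:ℝ)-1) ≠ 0 := by linarith
  have hwo' : wo ≠ 0 := ne_of_gt hwo
  have hgo' : go ≠ 0 := ne_of_gt hgo
  have hw4 : wo^4 = (1+go^2)^2 := by
    rw [show wo^4 = (wo^2)^2 by ring, hw2]
  rw [hw4, hw2] at hσp
  have A1 := mul_le_mul_of_nonneg_left hσp
    (by positivity : (0:ℝ) ≤ ((n:ℝ)-1) * go^4)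
  have A2 := mul_le_mul_of_nonneg_left hX2
    (by positivity : (0:ℝ) ≤ (1+go^2)^2)
  have A3 := mul_le_mul_of_nonneg_left hQC
    (by positivity : (0:ℝ) ≤ 2*((n:ℝ)-1)*(1+go^2))
  have hkey' : (n:ℝ)*(1+go^2)^2*(go^2*T-Q)^2
      ≤ 2*((n:ℝ)-1)*go^2*(1+go^2)*((1+go^2)*T-Q)*(go^2*T-Q) := by
    have hsum := add_le_add (add_le_add A1 A2) A3
    ring_nf at hsum ⊢
    linarith
  have hkey : (n:ℝ)*wo^4*(go^2*T-Q)^2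
      ≤ 2*((n:ℝ)-1)*go^2*wo^2*(wo^2*T-Q)*(go^2*T-Q) := by
    rw [hw4, hw2]; exact hkey'
  -- conclude
  rw [hH, hS, ge_iff_le, ← sub_nonneg]
  have expand : (go / wo) * ((wo^2*T - Q)/wo^3) * ((go^2*T - Q)/go^3)
      - (n : ℝ) / (2 * ((n:ℝ) - 1)) * (go / wo) ^ 2 * (((go^2*T - Q)/go^3)) ^ 2
      = (2*((n:ℝ)-1) * go^2 * wo^2 * (wo^2*T - Q) * (go^2*T-Q)
          - (n:ℝ) * wo^4 * (go^2*T-Q)^2)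
        / (2*((n:ℝ)-1) * go^4 * wo^4 * wo^2) := by
    field_simp
  rw [expand]
  apply div_nonneg (by linarith) (by positivity)


lemma offdiag_double (n : ℕ) (t : Fin n → Fin n → ℝ)
    (hsym : ∀ i j, t i j = t j i) (hdiag : ∀ i, t i i = 0) :
    2 * ∑ i, ∑ j, (if i < j then t i j else 0) = ∑ i, ∑ j, t i j := by
  have key : ∀ i j : Fin n, t i j
      = (if i < j then t i j else 0) + (if j < i then t i j else 0) := by
    intro i j
    rcases lt_trichotomy i j with h | h | h
    · rw [if_pos h, if_neg (asymm h), add_zero]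
    · subst h; simp [hdiag]
    · rw [if_neg (asymm h), if_pos h, zero_add]
  have e : ∑ i, ∑ j, t i j = (∑ i, ∑ j, (if i < j then t i j else 0))
      + ∑ i, ∑ j, (if j < i then t i j else 0) := by
    rw [← Finset.sum_add_distrib]
    refine Finset.sum_congr rfl fun i _ => ?_
    rw [← Finset.sum_add_distrib]
    exact Finset.sum_congr rfl fun j _ => key i j
  have e2 : ∑ i, ∑ j, (if j < i then t i j else 0)
      = ∑ i, ∑ j, (if i < j then t i j else 0) := by
    rw [Finset.sum_comm]
    refine Finset.sum_congr rfl fun a _ => Finset.sum_congr rfl fun b _ => ?_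
    by_cases h : a < b
    · rw [if_pos h, if_pos h, hsym]
    · rw [if_neg h, if_neg h]
  rw [e, e2]
  ring


set_option maxHeartbeats 1000000

/-- Theorem 2.3 / Corollary 2.4 (graphical case): let `f` be `C²` near `p` with
`Df(p) ≠ 0` and `f(p) = 0`. If the scalar curvature `2σ₂(A)` of the graph of `f`
is nonnegative at `p`, then `⟨ν,η⟩·H·H_Σ ≥ (n/(2(n−1)))·⟨ν,η⟩²·H_Σ²`, where
`H = Σ_i ∂_i(f_i/w)` is the mean curvature of the graph with respect to the
upward normal, `w = √(1+|Df|²)`, `⟨ν,η⟩ = |Df|/w`, and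
`H_Σ = Σ_i ∂_i(f_i/|Df|)` is the mean curvature of the level set `{f = 0}` with
respect to `η = −Df/|Df|`. In particular `H(p) = 0` implies `H_Σ(p) = 0`. -/
theorem stmt19 (n : ℕ) (hn : 2 ≤ n) (Ω : Set (Fin n → ℝ)) (hΩ : IsOpen Ω)
    (f : (Fin n → ℝ) → ℝ) (hf : ContDiffOn ℝ 2 f Ω) (p : Fin n → ℝ) (hp : p ∈ Ω)
    (hfp : f p = 0) :
    let F : Fin n → (Fin n → ℝ) → ℝ := fun i x => fderiv ℝ f x (Pi.single i 1)
    let w : (Fin n → ℝ) → ℝ := fun x => Real.sqrt (1 + ∑ l, (F l x) ^ 2)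
    let gn : (Fin n → ℝ) → ℝ := fun x => Real.sqrt (∑ l, (F l x) ^ 2)
    let A : Fin n → Fin n → ℝ :=
      fun i j => fderiv ℝ (fun y => F i y / w y) p (Pi.single j 1)
    let H : ℝ := ∑ i, A i i
    let HSig : ℝ := ∑ i, fderiv ℝ (fun y => F i y / gn y) p (Pi.single i 1)
    gn p ≠ 0 →
    0 ≤ 2 * ∑ i, ∑ j, (if i < j then A i i * A j j - A i j * A j i else 0) →
    ((gn p / w p) * H * HSig ≥ (n : ℝ) / (2 * ((n : ℝ) - 1)) * (gn p / w p) ^ 2 * HSig ^ 2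
      ∧ (H = 0 → HSig = 0)) := by
  intro F w gn A H HSig hg hσ
  classical
  -- regularity
  have hmem : Ω ∈ nhds p := hΩ.mem_nhds hp
  have hf2 : ContDiffAt ℝ 2 f p := hf.contDiffAt hmem
  have hφ : ContDiffAt ℝ 1 (fderiv ℝ f) p := hf2.fderiv_right (by norm_num)
  have hφd : DifferentiableAt ℝ (fderiv ℝ f) p := hφ.differentiableAt one_ne_zero
  have hsymm : IsSymmSndFDerivAt ℝ f p := hf2.isSymmSndFDerivAt (by rw [minSmoothness_of_isRCLikeNormedField])
  set D : Fin n → ((Fin n → ℝ) →L[ℝ] ℝ) := fun i =>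
    (ContinuousLinearMap.apply ℝ ℝ (Pi.single i (1:ℝ))).comp (fderiv ℝ (fderiv ℝ f) p)
    with hD
  have hFd : ∀ i, HasFDerivAt (F i) (D i) p := by
    intro i
    have h := ((ContinuousLinearMap.apply ℝ ℝ (Pi.single i (1:ℝ))).hasFDerivAt
      (x := fderiv ℝ f p)).comp p hφd.hasFDerivAt
    exact h
  set b : Fin n → Fin n → ℝ := fun i j => D i (Pi.single j 1) with hbdef
  have hbsym : ∀ i j, b i j = b j i := by
    intro i j
    simpa [hbdef, hD] using hsymm (Pi.single j 1) (Pi.single i 1)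
  set G : Fin n → ℝ := fun i => F i p with hG
  -- positivity facts
  have hS0 : (0:ℝ) ≤ ∑ l, (F l p)^2 := by positivity
  have hSne : (∑ l, (F l p)^2) ≠ 0 := by
    intro h
    exact hg (by simp only [gn, h, Real.sqrt_zero])
  have hSpos : (0:ℝ) < ∑ l, (F l p)^2 := lt_of_le_of_ne hS0 (Ne.symm hSne)
  have hgo : 0 < gn p := Real.sqrt_pos.mpr hSpos
  have h1S : (0:ℝ) < 1 + ∑ l, (F l p)^2 := by linarith
  have hwo : 0 < w p := Real.sqrt_pos.mpr h1S
  have hg2 : (gn p)^2 = ∑ l, (G l)^2 := Real.sq_sqrt hS0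
  have hw2 : (w p)^2 = 1 + (gn p)^2 := by
    rw [hg2]; exact Real.sq_sqrt (by rw [← hg2] at h1S ⊢; linarith)
  -- derivative of the squared-gradient sum
  have hsq : ∀ l : Fin n, HasFDerivAt (fun x => (F l x)^2) ((2 * F l p) • D l) p := by
    intro l
    have h := (hFd l).mul (hFd l)
    have hfun : (fun x => (F l x)^2) = fun y => F l y * F l y := by
      funext y; ring
    rw [hfun, show ((2:ℝ) * F l p) • D l = F l p • D l + F l p • D l by
      rw [two_mul, add_smul]]
    exact h
  have hSd : HasFDerivAt (fun x => ∑ l, (F l x)^2) (∑ l, (2 * F l p) • D l) p :=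
    HasFDerivAt.fun_sum (fun l _ => hsq l)
  set S' : (Fin n → ℝ) →L[ℝ] ℝ := ∑ l, (2 * F l p) • D l with hS'
  have hS'app : ∀ j, S' (Pi.single j 1) = 2 * ∑ l, G l * b l j := by
    intro j
    rw [hS']
    simp only [ContinuousLinearMap.coe_sum', Finset.sum_apply,
      ContinuousLinearMap.coe_smul', Pi.smul_apply, smul_eq_mul]
    rw [Finset.mul_sum]
    exact Finset.sum_congr rfl fun l _ => by rw [hbdef, hG]; ring
  -- derivative of w
  have hwd : HasFDerivAt w ((1 / (2 * w p)) • S') p := by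
    have h1 : HasFDerivAt (fun x => 1 + ∑ l, (F l x)^2) S' p := by
      have := (hasFDerivAt_const (1:ℝ) p).fun_add hSd
      simpa using this
    have h2 := h1.sqrt (ne_of_gt h1S)
    exact h2
  have hgnd : HasFDerivAt gn ((1 / (2 * gn p)) • S') p := hSd.sqrt hSne
  -- derivative of reciprocals
  have hwinv : HasFDerivAt (fun y => (w y)⁻¹)
      ((-((w p)^2)⁻¹ * (1 / (2 * w p))) • S') p := by
    have h := (hasDerivAt_inv (ne_of_gt hwo)).comp_hasFDerivAt p hwd
    rw [show (-((w p)^2)⁻¹ * (1 / (2 * w p))) • S'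
        = (-((w p)^2)⁻¹) • ((1 / (2 * w p)) • S') by rw [smul_smul]]
    exact h
  have hgninv : HasFDerivAt (fun y => (gn y)⁻¹)
      ((-((gn p)^2)⁻¹ * (1 / (2 * gn p))) • S') p := by
    have h := (hasDerivAt_inv (ne_of_gt hgo)).comp_hasFDerivAt p hgnd
    rw [show (-((gn p)^2)⁻¹ * (1 / (2 * gn p))) • S'
        = (-((gn p)^2)⁻¹) • ((1 / (2 * gn p)) • S') by rw [smul_smul]]
    exact h
  -- the shape operator entries
  have hAij : ∀ i j, A i j = b i j / w p - G i * (∑ l, G l * b l j) / (w p)^3 := by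
    intro i j
    have hq : HasFDerivAt (fun y => F i y / w y)
        (F i p • ((-((w p)^2)⁻¹ * (1 / (2 * w p))) • S') + (w p)⁻¹ • D i) p := by
      have h := (hFd i).mul hwinv
      have hfun : (fun y => F i y / w y) = fun y => F i y * (w y)⁻¹ := by
        funext y; rw [div_eq_mul_inv]
      rw [hfun]
      exact h
    have hev : A i j = F i p * ((-((w p)^2)⁻¹ * (1 / (2 * w p))) * S' (Pi.single j 1))
        + (w p)⁻¹ * b i j := by
      show fderiv ℝ (fun y => F i y / w y) p (Pi.single j 1) = _
      rw [hq.fderiv]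
      simp [hbdef]
    rw [hev, hS'app j, hG]
    have hwne : w p ≠ 0 := ne_of_gt hwo
    field_simp
    ring
  have hHSi : ∀ i, fderiv ℝ (fun y => F i y / gn y) p (Pi.single i 1)
      = b i i / gn p - G i * (∑ l, G l * b l i) / (gn p)^3 := by
    intro i
    have hq : HasFDerivAt (fun y => F i y / gn y)
        (F i p • ((-((gn p)^2)⁻¹ * (1 / (2 * gn p))) • S') + (gn p)⁻¹ • D i) p := by
      have h := (hFd i).mul hgninv
      have hfun : (fun y => F i y / gn y) = fun y => F i y * (gn y)⁻¹ := by
        funext y; rw [div_eq_mul_inv]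
      rw [hfun]
      exact h
    have hev : fderiv ℝ (fun y => F i y / gn y) p (Pi.single i 1)
        = F i p * ((-((gn p)^2)⁻¹ * (1 / (2 * gn p))) * S' (Pi.single i 1))
        + (gn p)⁻¹ * b i i := by
      rw [hq.fderiv]
      simp [hbdef]
    rw [hev, hS'app i, hG]
    have hgne : gn p ≠ 0 := ne_of_gt hgo
    field_simp
    ring
  -- assemble
  set c : Fin n → ℝ := fun j => ∑ l, G l * b l j with hcdef
  have hAform : ∀ i j, A i j = b i j / w p - G i * c j / (w p)^3 := by
    intro i j; rw [hAij i j]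
  have hHform : H = ∑ i, (b i i / w p - G i * c i / (w p)^3) :=
    Finset.sum_congr rfl fun i _ => hAform i i
  have hSform : HSig = ∑ i, (b i i / gn p - G i * c i / (gn p)^3) :=
    Finset.sum_congr rfl fun i _ => hHSi i
  have hdouble : 2 * ∑ i, ∑ j, (if i < j then A i i * A j j - A i j * A j i else 0)
      = (∑ i, (b i i / w p - G i * c i / (w p)^3))^2
        - ∑ i, ∑ j, ((b i j / w p - G i * c j / (w p)^3)
            * (b j i / w p - G j * c i / (w p)^3)) := by
    rw [offdiag_double n (fun i j => A i i * A j j - A i j * A j i)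
      (fun i j => by ring) (fun i => by ring)]
    have hsplit : ∑ i, ∑ j, (A i i * A j j - A i j * A j i)
        = (∑ i, ∑ j, A i i * A j j) - ∑ i, ∑ j, A i j * A j i := by
      rw [← Finset.sum_sub_distrib]
      exact Finset.sum_congr rfl fun i _ => by rw [← Finset.sum_sub_distrib]
    rw [hsplit, Isep]
    have e1 : (∑ i, A i i) * (∑ j, A j j)
        = (∑ i, (b i i / w p - G i * c i / (w p)^3))^2 := by
      rw [← hHform]; ring
    have e2 : ∑ i, ∑ j, A i j * A j i
        = ∑ i, ∑ j, ((b i j / w p - G i * c j / (w p)^3)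
            * (b j i / w p - G j * c i / (w p)^3)) :=
      Finset.sum_congr rfl fun i _ => Finset.sum_congr rfl fun j _ => by
        rw [hAform i j, hAform j i]
    rw [e1, e2]
  have hσ' : 0 ≤ (∑ i, (b i i / w p - G i * c i / (w p)^3)) ^ 2
      - ∑ i, ∑ j, ((b i j / w p - G i * c j / (w p)^3)
          * (b j i / w p - G j * c i / (w p)^3)) := by
    rw [← hdouble]; exact hσ
  have hcore := core_ineq n hn G b c hbsym (fun j => rfl) (gn p) (w p)
    hgo hwo hg2 hw2 hσ'
  rw [← hHform, ← hSform] at hcore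
  refine ⟨hcore, fun h0 => ?_⟩
  have hcoef : (0:ℝ) < (n : ℝ) / (2 * ((n:ℝ) - 1)) * (gn p / w p) ^ 2 := by
    have h2 : (2:ℝ) ≤ (n:ℝ) := by exact_mod_cast hn
    exact mul_pos (div_pos (by linarith) (by linarith))
      (pow_pos (div_pos hgo hwo) 2)
  rw [h0] at hcore
  have hsq : HSig^2 ≤ 0 := by
    rcases mul_nonneg (le_of_lt hcoef) (sq_nonneg HSig) with h
    nlinarith [hcore, hcoef, sq_nonneg HSig]
  have : HSig^2 = 0 := le_antisymm hsq (sq_nonneg HSig)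
  exact (pow_eq_zero_iff two_ne_zero).mp this
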